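/- For p, q ∈ [0,1]^n define γ̂_i = |p_i−q_i|/(1+|p_i+q_i−1|), p̂_i = 1/2 + γ̂_i/2, q̂_i = 1/2 − γ̂_i/2. Then |p̂_i − q̂_i| ≥ |p_i − q_i|/2 for each i, and ‖Ber(p) − Ber(q)‖_TV ≥ ‖Ber(p̂) − Ber(q̂)‖_TV. -/

import Mathlib

open Finset

/-- Total variation distance between two distributions on a finite set. -/
noncomputable def tv {Ω : Type*} [Fintype Ω] (P Q : Ω → ℝ) : ℝ :=
  (1/2) * ∑ ω, |P ω - Q ω|

/-- Product Bernoulli distribution on `{0,1}^n` with parameters `p`. -/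
def berProd {n : ℕ} (p : Fin n → ℝ) : (Fin n → Bool) → ℝ :=
  fun ω => ∏ i, if ω i then p i else 1 - p i

/-- Data processing inequality for tv. -/
lemma tv_data_processing {Ω Ω' : Type*} [Fintype Ω] [Fintype Ω']
    (K : Ω → Ω' → ℝ) (hK0 : ∀ ω ω', 0 ≤ K ω ω') (hK1 : ∀ ω, ∑ ω', K ω ω' = 1)
    (P Q : Ω → ℝ) :
    tv (fun ω' => ∑ ω, K ω ω' * P ω) (fun ω' => ∑ ω, K ω ω' * Q ω) ≤ tv P Q := by
  unfold tv
  apply mul_le_mul_of_nonneg_left _ (by norm_num : (0:ℝ) ≤ 1/2)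
  calc ∑ ω', |∑ ω, K ω ω' * P ω - ∑ ω, K ω ω' * Q ω|
      ≤ ∑ ω', ∑ ω, K ω ω' * |P ω - Q ω| := by
        apply Finset.sum_le_sum
        intro ω' _
        rw [← Finset.sum_sub_distrib]
        calc |∑ ω, (K ω ω' * P ω - K ω ω' * Q ω)| ≤ ∑ ω, |K ω ω' * P ω - K ω ω' * Q ω| :=
              Finset.abs_sum_le_sum_abs _ _
          _ = ∑ ω, K ω ω' * |P ω - Q ω| := by
              apply Finset.sum_congr rfl
              intro ω _
              rw [← mul_sub, abs_mul, abs_of_nonneg (hK0 ω ω')]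
    _ = ∑ ω, |P ω - Q ω| := by
        rw [Finset.sum_comm]
        apply Finset.sum_congr rfl
        intro ω _
        rw [← Finset.sum_mul, hK1 ω, one_mul]

/-- If each coordinate has a stochastic channel mapping `Ber(p i)` to `Ber(p' i)` and
`Ber(q i)` to `Ber(q' i)`, then the tv between product Bernoullis decreases. -/
lemma berProd_tv_mono {n : ℕ} (p q p' q' : Fin n → ℝ)
    (K : Fin n → Bool → Bool → ℝ)
    (hK0 : ∀ i b b', 0 ≤ K i b b')
    (hK1 : ∀ i b, K i b true + K i b false = 1)
    (hKp : ∀ i, K i true true * p i + K i false true * (1 - p i) = p' i)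
    (hKq : ∀ i, K i true true * q i + K i false true * (1 - q i) = q' i) :
    tv (berProd p') (berProd q') ≤ tv (berProd p) (berProd q) := by
  classical
  set Kp : (Fin n → Bool) → (Fin n → Bool) → ℝ := fun ω ω' => ∏ i, K i (ω i) (ω' i)
    with hKp_def
  have hKp0 : ∀ ω ω', 0 ≤ Kp ω ω' := fun ω ω' => Finset.prod_nonneg fun i _ => hK0 i _ _
  have hKp1 : ∀ ω, ∑ ω', Kp ω ω' = 1 := by
    intro ω
    simp only [hKp_def]
    rw [← Fintype.prod_sum (fun (i : Fin n) (b : Bool) => K i (ω i) b)]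
    apply Finset.prod_eq_one
    intro i _
    rw [Fintype.sum_bool]
    exact hK1 i (ω i)
  have key : ∀ (r r' : Fin n → ℝ),
      (∀ i, K i true true * r i + K i false true * (1 - r i) = r' i) →
      (fun ω' => ∑ ω, Kp ω ω' * berProd r ω) = berProd r' := by
    intro r r' hr
    funext ω'
    have hstep : ∀ ω : Fin n → Bool, Kp ω ω' * berProd r ω
        = ∏ i, (K i (ω i) (ω' i) * if ω i then r i else 1 - r i) := by
      intro ω
      simp only [hKp_def, berProd, ← Finset.prod_mul_distrib]
    simp only [hstep]
    rw [← Fintype.prod_sum (fun (i : Fin n) (b : Bool) =>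
      K i b (ω' i) * if b then r i else 1 - r i)]
    unfold berProd
    apply Finset.prod_congr rfl
    intro i _
    rw [Fintype.sum_bool]
    simp only [if_true, if_false]
    cases h : ω' i with
    | true => simpa using hr i
    | false =>
      norm_num
      linear_combination r i * hK1 i true + (1 - r i) * hK1 i false - hr i
  have := tv_data_processing Kp hKp0 hKp1 (berProd p) (berProd q)
  rwa [key p p' hKp, key q q' hKq] at this

theorem symmetrization {n : ℕ} (p q : Fin n → ℝ)
    (hp : ∀ i, p i ∈ Set.Icc (0:ℝ) 1) (hq : ∀ i, q i ∈ Set.Icc (0:ℝ) 1) :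
    let γ : Fin n → ℝ := fun i => |p i - q i| / (1 + |p i + q i - 1|)
    let phat : Fin n → ℝ := fun i => 1/2 + γ i / 2
    let qhat : Fin n → ℝ := fun i => 1/2 - γ i / 2
    (∀ i, |phat i - qhat i| ≥ |p i - q i| / 2) ∧
    tv (berProd p) (berProd q) ≥ tv (berProd phat) (berProd qhat) := by
  intro γ phat qhat
  classical
  have hph : ∀ i, phat i = 1/2 + γ i / 2 := fun _ => rfl
  have hqh : ∀ i, qhat i = 1/2 - γ i / 2 := fun _ => rfl
  have hγd : ∀ i, γ i = |p i - q i| / (1 + |p i + q i - 1|) := fun _ => rfl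
  have hDpos : ∀ i, (0:ℝ) < 1 + |p i + q i - 1| := fun i => by positivity
  have hD2 : ∀ i, 1 + |p i + q i - 1| ≤ 2 := by
    intro i
    obtain ⟨h1, h2⟩ := hp i; obtain ⟨h3, h4⟩ := hq i
    have : |p i + q i - 1| ≤ 1 := abs_le.2 ⟨by linarith, by linarith⟩
    linarith
  have hγ0 : ∀ i, 0 ≤ γ i := by
    intro i; rw [hγd]; positivity
  constructor
  · intro i
    rw [ge_iff_le, hph, hqh]
    have habs : |1/2 + γ i / 2 - (1/2 - γ i / 2)| = γ i := by
      rw [abs_of_nonneg (by linarith [hγ0 i])]; ring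
    rw [habs, hγd, div_le_div_iff₀ two_pos (hDpos i)]
    nlinarith [abs_nonneg (p i - q i), hD2 i]
  · -- construct per-coordinate channels
    set D : Fin n → ℝ := fun i => 1 + |p i + q i - 1| with hDdef
    set e : Fin n → ℝ := fun i => if 0 ≤ p i - q i then 1 else -1 with hedef
    set β : Fin n → ℝ := fun i => phat i - e i * p i / D i with hβdef
    set α : Fin n → ℝ := fun i => β i + e i / D i with hαdef
    have hDp : ∀ i, (0:ℝ) < D i := hDpos
    have hDne : ∀ i, D i ≠ 0 := fun i => (hDp i).ne'
    have hed : ∀ i, e i * (p i - q i) = |p i - q i| := by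
      intro i
      have he : e i = if 0 ≤ p i - q i then (1:ℝ) else -1 := rfl
      rw [he]; split_ifs with h
      · rw [one_mul, abs_of_nonneg h]
      · rw [abs_of_neg (not_le.1 h)]; ring
    have hβval : ∀ i, β i = (D i + |p i - q i| - 2 * e i * p i) / (2 * D i) := by
      intro i
      have h0 : β i = 1/2 + (|p i - q i| / D i) / 2 - e i * p i / D i := rfl
      rw [h0]
      field_simp
      rw [sub_div, add_div, div_self (hDne i)]
    have hαval : ∀ i, α i = (D i + |p i - q i| - 2 * e i * p i + 2 * e i) / (2 * D i) := by
      intro i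
      have h0 : α i = β i + e i / D i := rfl
      rw [h0, hβval i]
      field_simp
    have hmap_p : ∀ i, α i * p i + β i * (1 - p i) = phat i := by
      intro i
      have ha : α i = β i + e i / D i := rfl
      have hb : β i = phat i - e i * p i / D i := rfl
      rw [ha, hb]
      field_simp
      ring
    have hmap_q : ∀ i, α i * q i + β i * (1 - q i) = qhat i := by
      intro i
      have ha : α i = β i + e i / D i := rfl
      have hb : β i = phat i - e i * p i / D i := rfl
      have hγD : γ i = |p i - q i| / D i := rfl
      rw [ha, hb, hph i, hqh i, hγD, ← hed i]
      field_simp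
      ring
    -- bounds on the numerators, by case analysis
    have hN : ∀ i, 0 ≤ D i + |p i - q i| - 2 * e i * p i ∧
        D i + |p i - q i| - 2 * e i * p i ≤ 2 * D i ∧
        0 ≤ D i + |p i - q i| - 2 * e i * p i + 2 * e i ∧
        D i + |p i - q i| - 2 * e i * p i + 2 * e i ≤ 2 * D i := by
      intro i
      obtain ⟨h1, h2⟩ := hp i; obtain ⟨h3, h4⟩ := hq i
      have hDv : D i = 1 + |p i + q i - 1| := rfl
      have hev : e i = if 0 ≤ p i - q i then (1:ℝ) else -1 := rfl
      rcases le_or_gt 0 (p i - q i) with hd | hd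
      · rw [if_pos hd] at hev
        rcases le_or_gt 0 (p i + q i - 1) with hs | hs
        · rw [abs_of_nonneg hs] at hDv
          rw [hDv, hev, abs_of_nonneg hd]
          refine ⟨by linarith, by linarith, by linarith, by linarith⟩
        · rw [abs_of_neg hs] at hDv
          rw [hDv, hev, abs_of_nonneg hd]
          refine ⟨by linarith, by linarith, by linarith, by linarith⟩
      · rw [if_neg (not_le.2 hd)] at hev
        rcases le_or_gt 0 (p i + q i - 1) with hs | hs
        · rw [abs_of_nonneg hs] at hDv
          rw [hDv, hev, abs_of_neg hd]
          refine ⟨by linarith, by linarith, by linarith, by linarith⟩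
        · rw [abs_of_neg hs] at hDv
          rw [hDv, hev, abs_of_neg hd]
          refine ⟨by linarith, by linarith, by linarith, by linarith⟩
    have hβ0 : ∀ i, 0 ≤ β i := fun i => by
      rw [hβval i]; exact div_nonneg (hN i).1 (by linarith [hDp i])
    have hβ1 : ∀ i, β i ≤ 1 := fun i => by
      rw [hβval i, div_le_one (by linarith [hDp i])]; exact (hN i).2.1
    have hα0 : ∀ i, 0 ≤ α i := fun i => by
      rw [hαval i]; exact div_nonneg (hN i).2.2.1 (by linarith [hDp i])
    have hα1 : ∀ i, α i ≤ 1 := fun i => by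
      rw [hαval i, div_le_one (by linarith [hDp i])]; exact (hN i).2.2.2
    set K : Fin n → Bool → Bool → ℝ := fun i b b' =>
      if b then (if b' then α i else 1 - α i) else (if b' then β i else 1 - β i) with hKdef
    rw [ge_iff_le]
    refine berProd_tv_mono p q phat qhat K ?_ ?_ ?_ ?_
    · intro i b b'
      have h1 := hβ0 i; have h2 := hβ1 i; have h3 := hα0 i; have h4 := hα1 i
      cases b <;> cases b' <;> simp only [hKdef, Bool.false_eq_true, if_true, if_false,
        ite_true, ite_false] <;> linarith
    · intro i b
      cases b <;> simp [hKdef]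
    · intro i
      simpa [hKdef] using hmap_p i
    · intro i
      simpa [hKdef] using hmap_q i
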